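/- Let F be a free group on the underlying pointed set of a group G with basis s⁰, π : F → G the extension of id_G, and z²(h,g) = s⁰(h)s⁰(g)s⁰(hg)^{−1}. If g,g',h,h' ∈ G∖{1} satisfy z²(h,g) = z²(h',g'), then h = h' and g = g'. -/
import Mathlib


open Classical in
/-- The basis map `s⁰ : G → F` of the free group `F` on the underlying pointed set of `G`,
i.e. the free group on the set `G ∖ {1}`, sending `1` to `1` and `g ≠ 1` to the
corresponding free generator. -/
noncomputable def basisSection (G : Type*) [Group G] : G → FreeGroup {g : G // g ≠ 1} :=
  fun g => if h : g = 1 then 1 else FreeGroup.of ⟨g, h⟩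

open Classical in
/-- The reduced word of `z²(h,g) = s⁰(h)s⁰(g)s⁰(hg)⁻¹` for `g, h ≠ 1`. -/
lemma word_of_z {G : Type*} [Group G] (g h : G) (hg : g ≠ 1) (hh : h ≠ 1) :
    (basisSection G h * basisSection G g * (basisSection G (h * g))⁻¹).toWord =
      if hp : h * g = 1 then [(⟨h, hh⟩, true), (⟨g, hg⟩, true)]
      else [(⟨h, hh⟩, true), (⟨g, hg⟩, true), (⟨h * g, hp⟩, false)] := by
  split_ifs with hp
  · simp only [basisSection, dif_neg hg, dif_neg hh, dif_pos hp, inv_one, mul_one,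
      FreeGroup.of, FreeGroup.mul_mk, FreeGroup.toWord_mk]
    simp [FreeGroup.reduce.cons]
  · have hne : (⟨g, hg⟩ : {x : G // x ≠ 1}) ≠ ⟨h * g, hp⟩ := by
      intro e
      apply hh
      have : g = h * g := congrArg Subtype.val e
      have : h * g = 1 * g := by rw [one_mul]; exact this.symm
      exact mul_right_cancel this
    simp only [basisSection, dif_neg hg, dif_neg hh, dif_neg hp,
      FreeGroup.of, FreeGroup.inv_mk, FreeGroup.mul_mk, FreeGroup.toWord_mk, FreeGroup.invRev]
    simp [FreeGroup.reduce.cons, hne]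

/-- Let `F` be the free group on the underlying pointed set of `G` with basis `s⁰`, and
`z²(h,g) = s⁰(h)s⁰(g)s⁰(hg)⁻¹`. If `g, g', h, h' ∈ G ∖ {1}` satisfy
`z²(h,g) = z²(h',g')`, then `h = h'` and `g = g'`. -/
theorem basisSection_cocycle_injective {G : Type*} [Group G] (g g' h h' : G)
    (hg : g ≠ 1) (hg' : g' ≠ 1) (hh : h ≠ 1) (hh' : h' ≠ 1)
    (heq : basisSection G h * basisSection G g * (basisSection G (h * g))⁻¹ =
      basisSection G h' * basisSection G g' * (basisSection G (h' * g'))⁻¹) :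
    h = h' ∧ g = g' := by
  classical
  have hw := congrArg FreeGroup.toWord heq
  rw [word_of_z g h hg hh, word_of_z g' h' hg' hh'] at hw
  split_ifs at hw <;> simp_all [Subtype.ext_iff]
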